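/- Let c and d be join-irreducible elements of Γ(X;γ), with φ(c) = (p,q) and φ(d) = (p',q'). Then c ≤ d in Γ(X;γ) if and only if p ≥ p' and q ≥ q'. -/
import Mathlib


def IsTup (n m : ℕ) (c : Fin m → ℕ) : Prop :=
  StrictMono c ∧ ∀ i, 1 ≤ c i ∧ c i ≤ n

def Gamma (n m : ℕ) : Set (Fin m → ℕ) := {c | IsTup n m c}

def GammaF (n m : ℕ) (b : Fin m → ℕ) : Set (Fin m → ℕ) :=
  {c | IsTup n m c ∧ b ≤ c}

/-- `prev c i` is `c (i-1)`, with the convention `c 0 = 0` (1-based indexing). -/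
def prev {m : ℕ} (c : Fin m → ℕ) (i : Fin m) : ℕ :=
  if _ : i.1 = 0 then 0 else c ⟨i.1 - 1, Nat.lt_of_le_of_lt (Nat.sub_le _ _) i.2⟩

/-- the condition `c i > b i` and `c i > c (i-1) + 1`. -/
def Good {m : ℕ} (b c : Fin m → ℕ) (i : Fin m) : Prop :=
  b i < c i ∧ prev c i + 1 < c i

/-- `c` is join-irreducible in `Γ(X;γ)`: it covers exactly one element. -/
def JoinIrr (n m : ℕ) (b : Fin m → ℕ) (c : ↥(GammaF n m b)) : Prop :=
  ∃! y : ↥(GammaF n m b), y ⋖ c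

/-- the poset of join-irreducible elements of `Γ(X;γ)`. -/
def JP (n m : ℕ) (b : Fin m → ℕ) : Set ↥(GammaF n m b) := {c | JoinIrr n m b c}

/-- the map φ, computed at index `i` (0-based; 1-based index is `i+1`). -/
def phi (n m : ℕ) (c : Fin m → ℕ) (i : Fin m) : ℕ × ℕ :=
  (n - c i - (m - 1 - i.1), i.1)

section Aux

variable {n m : ℕ} {b : Fin m → ℕ}

lemma prev_eq {c : Fin m → ℕ} {k k' : Fin m} (hk0 : k.1 ≠ 0) (h : k'.1 = k.1 - 1) :
    prev c k = c k' := by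
  rw [prev, dif_neg hk0]
  congr 1
  exact Fin.ext (by simp [h])

lemma gap {c : Fin m → ℕ} (h : StrictMono c) :
    ∀ t (k i : Fin m), k.1 + t ≤ i.1 → c k + t ≤ c i := by
  intro t
  induction t with
  | zero =>
    intro k i hk
    simpa using h.monotone (Fin.le_def.mpr (by omega))
  | succ t ih =>
    intro k i hk
    obtain ⟨i', hi'⟩ : ∃ i' : Fin m, i'.1 = i.1 - 1 := ⟨⟨i.1 - 1, by omega⟩, rfl⟩
    have h1 := ih k i' (by omega)
    have h2 : c i' < c i := h (Fin.lt_def.mpr (by omega))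
    omega

/-- decreasing `c` at a Good index gives an element covered by `c`. -/
lemma dec_covby (c : ↥(GammaF n m b)) (k : Fin m) (hk : Good b c.1 k) :
    ∃ y : ↥(GammaF n m b), y ⋖ c ∧ y.1 k = c.1 k - 1 ∧ ∀ l, l ≠ k → y.1 l = c.1 l := by
  classical
  have hst : StrictMono c.1 := c.2.1.1
  have hbd : ∀ l, 1 ≤ c.1 l ∧ c.1 l ≤ n := c.2.1.2
  have hbc : ∀ l, b l ≤ c.1 l := fun l => c.2.2 l
  obtain ⟨hk1, hk2⟩ := hk
  set y : Fin m → ℕ := fun l => if l = k then c.1 k - 1 else c.1 l with hy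
  have hyk : y k = c.1 k - 1 := if_pos rfl
  have hyne : ∀ l, l ≠ k → y l = c.1 l := fun l hl => if_neg hl
  have hck2 : 2 ≤ c.1 k := by omega
  have hprevlt : ∀ a : Fin m, a < k → c.1 a < c.1 k - 1 := by
    intro a ha
    have haa := Fin.lt_def.mp ha
    have hk0 : k.1 ≠ 0 := by omega
    obtain ⟨k', hk'⟩ : ∃ k' : Fin m, k'.1 = k.1 - 1 := ⟨⟨k.1 - 1, by omega⟩, rfl⟩
    have hk2' := hk2
    rw [prev_eq hk0 hk'] at hk2'
    have hmono : c.1 a ≤ c.1 k' := hst.monotone (Fin.le_def.mpr (by omega))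
    omega
  have hymem : y ∈ GammaF n m b := by
    refine ⟨⟨?_, ?_⟩, ?_⟩
    · intro a a' haa
      by_cases ha : a = k <;> by_cases ha' : a' = k
      · rw [ha, ha'] at haa; exact absurd haa (lt_irrefl _)
      · rw [ha, hyk, hyne a' ha']
        have : c.1 k < c.1 a' := hst (ha ▸ haa)
        omega
      · rw [ha', hyk, hyne a ha]
        exact hprevlt a (ha' ▸ haa)
      · rw [hyne a ha, hyne a' ha']
        exact hst haa
    · intro l
      by_cases hl : l = k
      · rw [hl, hyk]
        exact ⟨by omega, by have := (hbd k).2; omega⟩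
      · rw [hyne l hl]; exact hbd l
    · intro l
      show b l ≤ y l
      by_cases hl : l = k
      · rw [hl, hyk]; omega
      · rw [hyne l hl]; exact hbc l
  have hylt : (⟨y, hymem⟩ : ↥(GammaF n m b)) < c := by
    rw [← Subtype.coe_lt_coe]
    show y < c.1
    refine lt_of_le_of_ne ?_ ?_
    · intro l
      show y l ≤ c.1 l
      by_cases hl : l = k
      · rw [hl, hyk]; omega
      · rw [hyne l hl]
    · intro hEq
      have := congrFun hEq k
      rw [hyk] at this
      omega
  refine ⟨⟨y, hymem⟩, ⟨hylt, ?_⟩, hyk, hyne⟩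
  intro z hz hzc
  have hz1 : ∀ l, y l ≤ z.1 l := fun l => (le_of_lt (Subtype.coe_lt_coe.mpr hz) : y ≤ z.1) l
  have hz2 : ∀ l, z.1 l ≤ c.1 l := fun l => (le_of_lt (Subtype.coe_lt_coe.mpr hzc) : z.1 ≤ c.1) l
  have hzeq : ∀ l, l ≠ k → z.1 l = c.1 l := by
    intro l hl
    have h1 := hz1 l
    rw [hyne l hl] at h1
    exact le_antisymm (hz2 l) h1
  have hcase : z.1 k = c.1 k - 1 ∨ z.1 k = c.1 k := by
    have h1 := hz1 k
    rw [hyk] at h1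
    have h2 := hz2 k
    omega
  rcases hcase with h | h
  · have hzy : z ≤ (⟨y, hymem⟩ : ↥(GammaF n m b)) := by
      rw [← Subtype.coe_le_coe]
      show z.1 ≤ y
      intro l
      show z.1 l ≤ y l
      by_cases hl : l = k
      · rw [hl, hyk]; omega
      · rw [hyne l hl, hzeq l hl]
    exact absurd hzy hz.not_ge
  · have hcz : c ≤ z := by
      rw [← Subtype.coe_le_coe]
      intro l
      show c.1 l ≤ z.1 l
      by_cases hl : l = k
      · rw [hl]; omega
      · rw [hzeq l hl]
    exact absurd hcz hzc.not_ge

lemma unique_good (c : ↥(GammaF n m b)) (hc : JoinIrr n m b c)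
    {i k : Fin m} (hi : Good b c.1 i) (hk : Good b c.1 k) : i = k := by
  by_contra hne
  obtain ⟨y0, _, huniq⟩ := hc
  obtain ⟨y1, hy1, hy1i, hy1o⟩ := dec_covby c i hi
  obtain ⟨y2, hy2, hy2k, hy2o⟩ := dec_covby c k hk
  have h12 : y1 = y2 := (huniq y1 hy1).trans (huniq y2 hy2).symm
  have h1 : y1.1 i = c.1 i - 1 := hy1i
  have h2 : y2.1 i = c.1 i := hy2o i hne
  have hci : 1 ≤ c.1 i := (c.2.1.2 i).1
  rw [h12, h2] at h1
  omega

lemma eq_b_of_lt (hb : b ∈ Gamma n m) (c : ↥(GammaF n m b)) (hc : JoinIrr n m b c)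
    {i : Fin m} (hi : Good b c.1 i) : ∀ k : Fin m, k.1 < i.1 → c.1 k = b k := by
  have hbst : StrictMono b := hb.1
  have hbbd : ∀ l, 1 ≤ b l ∧ b l ≤ n := hb.2
  have hbc : ∀ l, b l ≤ c.1 l := fun l => c.2.2 l
  have key : ∀ t, ∀ k : Fin m, k.1 = t → k.1 < i.1 → c.1 k = b k := by
    intro t
    induction t using Nat.strong_induction_on with
    | _ t ih =>
      intro k hkt hki
      have hnotgood : ¬ Good b c.1 k := by
        intro hg
        exact absurd (unique_good c hc hi hg) (by intro h; rw [← h] at hki; omega)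
      rw [Good, not_and_or, not_lt, not_lt] at hnotgood
      have hbk : b k ≤ c.1 k := hbc k
      rcases hnotgood with h | h
      · omega
      · by_cases hk0 : k.1 = 0
        · rw [prev, dif_pos hk0] at h
          have hb1 : 1 ≤ b k := (hbbd k).1
          omega
        · obtain ⟨k', hk'⟩ : ∃ k' : Fin m, k'.1 = k.1 - 1 := ⟨⟨k.1 - 1, by omega⟩, rfl⟩
          rw [prev_eq hk0 hk'] at h
          have hck' : c.1 k' = b k' := ih k'.1 (by omega) k' rfl (by omega)
          have hbk' : b k' < b k := hbst (Fin.lt_def.mpr (by omega))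
          omega
  exact fun k => key k.1 k rfl

lemma cases_of_ne (c : ↥(GammaF n m b)) (hc : JoinIrr n m b c)
    {i : Fin m} (hi : Good b c.1 i) {k : Fin m} (hk : k ≠ i) :
    c.1 k ≤ b k ∨ c.1 k ≤ prev c.1 k + 1 := by
  have hnotgood : ¬ Good b c.1 k := fun hg => hk (unique_good c hc hg hi)
  rw [Good, not_and_or, not_lt, not_lt] at hnotgood
  exact hnotgood

end Aux

theorem stmt4 (n m : ℕ) (hm : 1 ≤ m) (hmn : m ≤ n) (b : Fin m → ℕ)
    (hb : b ∈ Gamma n m) (c d : ↥(GammaF n m b))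
    (hc : JoinIrr n m b c) (hd : JoinIrr n m b d)
    (i j : Fin m) (hi : Good b (c : Fin m → ℕ) i) (hj : Good b (d : Fin m → ℕ) j)
    (p q p' q' : ℕ) (hpq : phi n m (c : Fin m → ℕ) i = (p, q))
    (hpq' : phi n m (d : Fin m → ℕ) j = (p', q')) :
    c ≤ d ↔ p' ≤ p ∧ q' ≤ q := by
  have hcst : StrictMono (c : Fin m → ℕ) := c.2.1.1
  have hdst : StrictMono (d : Fin m → ℕ) := d.2.1.1
  have hcbd : ∀ l, 1 ≤ c.1 l ∧ c.1 l ≤ n := c.2.1.2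
  have hdbd : ∀ l, 1 ≤ d.1 l ∧ d.1 l ≤ n := d.2.1.2
  have hcb : ∀ l, b l ≤ c.1 l := fun l => c.2.2 l
  have hdb : ∀ l, b l ≤ d.1 l := fun l => d.2.2 l
  rw [phi, Prod.mk.injEq] at hpq hpq'
  obtain ⟨hp, hq⟩ := hpq
  obtain ⟨hp', hq'⟩ := hpq'
  obtain ⟨L, hL⟩ : ∃ L : Fin m, L.1 = m - 1 := ⟨⟨m - 1, by omega⟩, rfl⟩
  have hcbound : c.1 i + (m - 1 - i.1) ≤ n := by
    have h1 := gap hcst (m - 1 - i.1) i L (by have := i.2; omega)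
    have h2 : c.1 L ≤ n := (hcbd L).2
    omega
  have hdbound : d.1 j + (m - 1 - j.1) ≤ n := by
    have h1 := gap hdst (m - 1 - j.1) j L (by have := j.2; omega)
    have h2 : d.1 L ≤ n := (hdbd L).2
    omega
  have him : i.1 ≤ m - 1 := by have := i.2; omega
  have hjm : j.1 ≤ m - 1 := by have := j.2; omega
  constructor
  · intro hle
    have hle' : ∀ k, c.1 k ≤ d.1 k := fun k => (Subtype.coe_le_coe.mpr hle : c.1 ≤ d.1) k
    have hji : j.1 ≤ i.1 := by
      by_contra hij
      push_neg at hij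
      have hdi : d.1 i = b i := eq_b_of_lt hb d hd hj i hij
      have h1 := hle' i
      have h2 := hi.1
      omega
    have hkey : ∀ t, ∀ k : Fin m, k.1 + t = i.1 → j.1 ≤ k.1 → c.1 i ≤ d.1 k + t := by
      intro t
      induction t with
      | zero =>
        intro k hkt _
        have hki : k = i := Fin.ext (by omega)
        rw [hki]
        have := hle' i
        omega
      | succ t ih =>
        intro k hkt hjk
        obtain ⟨k'', hk''⟩ : ∃ k'' : Fin m, k''.1 = k.1 + 1 := ⟨⟨k.1 + 1, by omega⟩, rfl⟩
        have ih' := ih k'' (by omega) (by omega)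
        have hk''ne : k'' ≠ j := by intro h; rw [h] at hk''; omega
        rcases cases_of_ne d hd hj hk''ne with h | h
        · -- d k'' = b k'' : contradiction
          exfalso
          have hdk : d.1 k'' = b k'' := le_antisymm h (hdb k'')
          have hbk : b k'' ≤ c.1 k'' := hcb k''
          have hgap : c.1 k'' + t ≤ c.1 i := gap hcst t k'' i (by omega)
          by_cases ht0 : t = 0
          · have hki : k'' = i := Fin.ext (by omega)
            rw [hki] at hdk hbk ih'
            have h1 := hi.1
            have h2 := hle' i
            omega
          · have hi0 : i.1 ≠ 0 := by omega
            have hprev := hi.2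
            obtain ⟨i', hi'⟩ : ∃ i' : Fin m, i'.1 = i.1 - 1 := ⟨⟨i.1 - 1, by omega⟩, rfl⟩
            rw [prev_eq hi0 hi'] at hprev
            have hgap2 : c.1 k'' + (t - 1) ≤ c.1 i' := gap hcst (t - 1) k'' i' (by omega)
            omega
        · have hk0 : k''.1 ≠ 0 := by omega
          rw [prev_eq hk0 (by omega : k.1 = k''.1 - 1)] at h
          omega
    have hfin : c.1 i ≤ d.1 j + (i.1 - j.1) := hkey (i.1 - j.1) j (by omega) le_rfl
    constructor
    · omega
    · omega
  · rintro ⟨hp'p, hq'q⟩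
    have hji : j.1 ≤ i.1 := by omega
    have hcd : c.1 i + j.1 ≤ d.1 j + i.1 := by omega
    rw [← Subtype.coe_le_coe]
    have key : ∀ t, ∀ k : Fin m, k.1 = t → c.1 k ≤ d.1 k := by
      intro t
      induction t using Nat.strong_induction_on with
      | _ t ih =>
        intro k hkt
        rcases lt_trichotomy k.1 i.1 with h | h | h
        · rw [eq_b_of_lt hb c hc hi k h]
          exact hdb k
        · have hki : k = i := Fin.ext h
          rw [hki]
          have hgap : d.1 j + (i.1 - j.1) ≤ d.1 i := by
            have := gap hdst (i.1 - j.1) j i (by omega)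
            omega
          omega
        · have hkne : k ≠ i := by intro hEq; rw [hEq] at h; omega
          rcases cases_of_ne c hc hi hkne with hcase | hcase
          · exact le_trans hcase (hdb k)
          · have hk0 : k.1 ≠ 0 := by omega
            obtain ⟨k', hk'⟩ : ∃ k' : Fin m, k'.1 = k.1 - 1 := ⟨⟨k.1 - 1, by omega⟩, rfl⟩
            rw [prev_eq hk0 hk'] at hcase
            have ihk : c.1 k' ≤ d.1 k' := ih (k.1 - 1) (by omega) k' (by omega)
            have hd' : d.1 k' < d.1 k := hdst (Fin.lt_def.mpr (by omega))
            omega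
    exact fun k => key k.1 k rfl
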